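/- Let A be an invertible symmetric real N×N matrix whose largest eigenvalue in absolute value is λ_max, and let τ_u, τ_p > 0. The spectral radius of the PDHG iteration matrix M = [[I - 2τ_uτ_p AᵀA, -τ_u Aᵀ], [τ_p A, I]] is strictly less than 1 if and only if τ_uτ_p < 4/(3λ_max²). -/

import Mathlib

open Matrix

lemma quad_root_iff (s : ℝ) (hs : 0 < s) :
    (∀ μ : ℂ, (μ - (1 - 2*s)) * (μ - 1) + s = 0 → ‖μ‖ < 1) ↔ s < 4/3 := by
  constructor
  · intro h
    by_contra hlt
    push_neg at hlt
    set r : ℝ := Real.sqrt (s*(s-1)) with hr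
    have hrnn : 0 ≤ r := Real.sqrt_nonneg _
    have hsq : r^2 = s*(s-1) := Real.sq_sqrt (by nlinarith)
    have key : ((1-s) - r - (1 - 2*s)) * ((1-s) - r - 1) + s = 0 := by nlinarith
    have hroot : ((((1-s) - r : ℝ) : ℂ) - (1 - 2*s)) * ((((1-s) - r : ℝ):ℂ) - 1) + s = 0 := by
      exact_mod_cast key
    have habs := h _ hroot
    rw [Complex.norm_real, Real.norm_eq_abs] at habs
    have hrge : 2 - s ≤ r := by
      rcases le_or_gt (2-s) 0 with h2 | h2
      · linarith
      · by_contra hc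
        push_neg at hc
        nlinarith
    have : 1 ≤ |1 - s - r| := le_abs.2 (Or.inr (by linarith))
    linarith

  · intro hs43 μ hμ
    obtain ⟨x, y, rfl⟩ : ∃ x y : ℝ, μ = ⟨x, y⟩ := ⟨μ.re, μ.im, rfl⟩
    have hre : (x - (1 - 2*s)) * (x - 1) - y*y + s = 0 := by
      have := congrArg Complex.re hμ
      simp [Complex.ext_iff] at this
      linarith [this]
    have him' : y * (2*x - 2 + 2*s) = 0 := by
      have := congrArg Complex.im hμ
      simp [Complex.ext_iff] at this
      linear_combination this
    have habs : ‖(⟨x,y⟩ : ℂ)‖ = Real.sqrt (x^2 + y^2) := by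
      simp [Complex.norm_def, Complex.normSq_apply]; ring_nf
    rw [habs]
    have h1 : x^2 + y^2 < 1 := by
      rcases eq_or_ne y 0 with rfl | hy
      · simp only [mul_zero, zero_mul, sub_zero] at hre ⊢
        have hx1 : x < 1 := by nlinarith [hre]
        have hx2 : -1 < x := by
          by_contra hc
          push_neg at hc
          nlinarith [mul_nonneg (by linarith : (0:ℝ) ≤ 1-3*x) (by linarith : (0:ℝ) ≤ -(x+1))]
        nlinarith
      · have hx : x = 1 - s := by
          rcases mul_eq_zero.1 him' with h' | h'
          · exact absurd h' hy
          · linarith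
        subst hx
        nlinarith [hre]
    calc Real.sqrt (x^2+y^2) < Real.sqrt 1 :=
          Real.sqrt_lt_sqrt (by positivity) (by simpa using h1)
      _ = 1 := Real.sqrt_one


lemma det_fromBlocks_diagonal {n : ℕ} {R : Type*} [CommRing R] (a b c d : Fin n → R) :
    (Matrix.fromBlocks (diagonal a) (diagonal b) (diagonal c) (diagonal d)).det
      = ∏ k, (a k * d k - b k * c k) := by
  let e : Fin 2 × Fin n ≃ (Fin n) ⊕ (Fin n) :=
    (Equiv.prodCongr finTwoEquiv (Equiv.refl _)).trans (Equiv.boolProdEquivSum (Fin n))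
  have key : Matrix.fromBlocks (diagonal a) (diagonal b) (diagonal c) (diagonal d)
      = reindex e e (blockDiagonal fun k => !![a k, b k; c k, d k]) := by
    ext i j
    rcases i with i | i <;> rcases j with j | j <;>
      simp [e, blockDiagonal, diagonal, Equiv.boolProdEquivSum, finTwoEquiv,
        Matrix.fromBlocks] <;>
      split <;> simp_all [Matrix.of_apply]
  rw [key, det_reindex_self, det_blockDiagonal]
  congr 1
  ext k
  rw [det_fin_two_of]

lemma aux_sub_fromBlocks {n : ℕ} {R : Type*} [CommRing R] (a b c d a' b' c' d' : Fin n → R) :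
    Matrix.fromBlocks (diagonal a) (diagonal b) (diagonal c) (diagonal d)
      - Matrix.fromBlocks (diagonal a') (diagonal b') (diagonal c') (diagonal d')
    = Matrix.fromBlocks (diagonal (a - a')) (diagonal (b - b'))
        (diagonal (c - c')) (diagonal (d - d')) := by
  ext i j
  rcases i with i|i <;> rcases j with j|j <;>
    simp [diagonal, Matrix.sub_apply] <;> split <;> simp


/-- For invertible symmetric `A` with eigenvalues `λ_k` and `λ_max = max_k |λ_k|`,
the spectral radius of the PDHG iteration matrix
`M = [[I - 2τ_uτ_p AᵀA, -τ_u Aᵀ], [τ_p A, I]]` is `< 1` iff `τ_uτ_p < 4/(3λ_max²)`. -/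
theorem stmt_5 {N : ℕ} (hN : 0 < N) (A : Matrix (Fin N) (Fin N) ℝ) (hA : A.IsSymm)
    (hdet : IsUnit A.det) (lam : Fin N → ℝ) (Q : Matrix (Fin N) (Fin N) ℝ)
    (hQ : Q * Qᵀ = 1) (hdecomp : A = Q * Matrix.diagonal lam * Qᵀ)
    (lmax : ℝ) (hmax : IsGreatest (Set.range fun k => |lam k|) lmax)
    (τu τp : ℝ) (hu : 0 < τu) (hp : 0 < τp) :
    (∀ μ ∈ spectrum ℂ
        ((Matrix.fromBlocks (1 - (2 * τu * τp) • (Aᵀ * A)) ((-τu) • Aᵀ)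
            (τp • A) 1).map Complex.ofReal),
      ‖μ‖ < 1) ↔ τu * τp < 4 / (3 * lmax ^ 2) := by
  have hAT : Aᵀ = A := hA
  have hQ' : Qᵀ * Q = 1 := mul_eq_one_comm.mp hQ
  have ht0 : 0 < τu * τp := mul_pos hu hp
  have hdetA : A.det = ∏ i, lam i := by
    rw [hdecomp, det_mul, det_mul, det_diagonal, det_transpose]
    have h1 : Q.det * Q.det = 1 := by
      have := congrArg Matrix.det hQ
      rwa [det_mul, det_transpose, det_one] at this
    linear_combination (∏ i, lam i) * h1
  have hlam : ∀ k, lam k ≠ 0 := by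
    intro k hk
    exact hdet.ne_zero (by rw [hdetA]; exact Finset.prod_eq_zero (Finset.mem_univ k) hk)
  obtain ⟨j, hj⟩ := hmax.1
  have hlmax : 0 < lmax := by rw [← hj]; exact abs_pos.mpr (hlam j)
  -- conjugation helper
  have hconj_mul : ∀ X Y : Matrix (Fin N) (Fin N) ℝ,
      Qᵀ * (X * Y) * Q = (Qᵀ * X * Q) * (Qᵀ * Y * Q) := by
    intro X Y
    have h2 : (Qᵀ * X * Q) * (Qᵀ * Y * Q) = Qᵀ * X * (Q * Qᵀ) * (Y * Q) := by
      simp only [Matrix.mul_assoc]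
    rw [h2, hQ, Matrix.mul_one]
    simp only [Matrix.mul_assoc]
  have hQAQ : Qᵀ * A * Q = diagonal lam := by
    rw [hdecomp]
    calc Qᵀ * (Q * diagonal lam * Qᵀ) * Q = (Qᵀ * Q) * diagonal lam * (Qᵀ * Q) := by
          simp only [Matrix.mul_assoc]
      _ = diagonal lam := by rw [hQ', Matrix.one_mul, Matrix.mul_one]
  have hQA2Q : Qᵀ * (Aᵀ * A) * Q = diagonal (fun k => lam k ^ 2) := by
    rw [hAT, hconj_mul, hQAQ, diagonal_mul_diagonal]
    congr 1; ext k; ring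
  have hB11 : Qᵀ * (1 - (2 * τu * τp) • (Aᵀ * A)) * Q
      = diagonal (fun k => 1 - 2 * τu * τp * lam k ^ 2) := by
    rw [Matrix.mul_sub, Matrix.sub_mul, Matrix.mul_one, hQ', Matrix.mul_smul,
      Matrix.smul_mul, hQA2Q, ← diagonal_smul, ← diagonal_one, ← diagonal_sub]
    ext i j
    rcases eq_or_ne i j with rfl | h
    · simp [smul_eq_mul]; try ring
    · simp [diagonal_apply_ne _ h]
  have hB12 : Qᵀ * ((-τu) • Aᵀ) * Q = diagonal (fun k => -τu * lam k) := by
    rw [hAT, Matrix.mul_smul, Matrix.smul_mul, hQAQ, ← diagonal_smul]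
    ext i j
    rcases eq_or_ne i j with rfl | h
    · simp [smul_eq_mul]; try ring
    · simp [diagonal_apply_ne _ h]
  have hB21 : Qᵀ * (τp • A) * Q = diagonal (fun k => τp * lam k) := by
    rw [Matrix.mul_smul, Matrix.smul_mul, hQAQ, ← diagonal_smul]
    ext i j
    rcases eq_or_ne i j with rfl | h
    · simp [smul_eq_mul]; try ring
    · simp [diagonal_apply_ne _ h]
  have hB22 : Qᵀ * (1 : Matrix (Fin N) (Fin N) ℝ) * Q = diagonal (fun _ => (1:ℝ)) := by
    rw [Matrix.mul_one, hQ', diagonal_one]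
  -- block matrices
  have hPT : (Matrix.fromBlocks Qᵀ 0 0 Qᵀ)ᵀ = Matrix.fromBlocks Q 0 0 Q := by
    rw [fromBlocks_transpose]; simp
  have hPPT : Matrix.fromBlocks Qᵀ 0 0 Qᵀ * (Matrix.fromBlocks Qᵀ 0 0 Qᵀ)ᵀ = 1 := by
    rw [hPT, fromBlocks_multiply]
    simp only [Matrix.mul_zero, Matrix.zero_mul, add_zero, zero_add, hQ']
    exact fromBlocks_one
  have hPMP : Matrix.fromBlocks Qᵀ 0 0 Qᵀ *
      Matrix.fromBlocks (1 - (2 * τu * τp) • (Aᵀ * A)) ((-τu) • Aᵀ) (τp • A) 1 *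
      (Matrix.fromBlocks Qᵀ 0 0 Qᵀ)ᵀ = Matrix.fromBlocks
      (diagonal (fun k => 1 - 2 * τu * τp * lam k ^ 2)) (diagonal (fun k => -τu * lam k))
      (diagonal (fun k => τp * lam k)) (diagonal (fun _ => (1:ℝ))) := by
    rw [hPT, fromBlocks_multiply, fromBlocks_multiply]
    simp only [Matrix.mul_zero, Matrix.zero_mul, add_zero, zero_add]
    rw [hB11, hB12, hB21, hB22]
  -- complex versions
  have hcoe : ⇑Complex.ofRealHom = Complex.ofReal := rfl
  set Pc : Matrix (Fin N ⊕ Fin N) (Fin N ⊕ Fin N) ℂ :=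
    (Matrix.fromBlocks Qᵀ 0 0 Qᵀ).map Complex.ofReal with hPc
  set Mc : Matrix (Fin N ⊕ Fin N) (Fin N ⊕ Fin N) ℂ :=
    (Matrix.fromBlocks (1 - (2 * τu * τp) • (Aᵀ * A)) ((-τu) • Aᵀ)
      (τp • A) 1).map Complex.ofReal with hMc
  have hPcT : Pc * Pcᵀ = 1 := by
    rw [hPc, ← Matrix.transpose_map, ← hcoe, ← Matrix.map_mul, hPPT]
    simp
  have hdetPc : Pc.det * Pcᵀ.det = 1 := by
    rw [← det_mul, hPcT, det_one]
  -- determinant formula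
  have hdetform : ∀ μ : ℂ,
      (algebraMap ℂ (Matrix (Fin N ⊕ Fin N) (Fin N ⊕ Fin N) ℂ) μ - Mc).det
        = ∏ k, ((μ - ((1 - 2 * τu * τp * lam k ^ 2 : ℝ) : ℂ)) * (μ - 1)
            - ((-τu * lam k : ℝ) : ℂ) * ((τp * lam k : ℝ) : ℂ)) := by
    intro μ
    set S := algebraMap ℂ (Matrix (Fin N ⊕ Fin N) (Fin N ⊕ Fin N) ℂ) μ with hS
    have e1 : (S - Mc).det = (Pc * (S - Mc) * Pcᵀ).det := by
      rw [det_mul, det_mul, mul_comm Pc.det, mul_assoc, hdetPc, mul_one]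
    have e2 : Pc * (S - Mc) * Pcᵀ = S - Pc * Mc * Pcᵀ := by
      rw [Matrix.mul_sub, Matrix.sub_mul, ← (Algebra.commutes μ Pc), hS]
      congr 1
      rw [Matrix.mul_assoc, hPcT, Matrix.mul_one]
    have e3 : Pc * Mc * Pcᵀ = Matrix.fromBlocks
        (diagonal (fun k => ((1 - 2 * τu * τp * lam k ^ 2 : ℝ) : ℂ)))
        (diagonal (fun k => ((-τu * lam k : ℝ) : ℂ)))
        (diagonal (fun k => ((τp * lam k : ℝ) : ℂ)))
        (diagonal (fun _ => ((1 : ℝ) : ℂ))) := by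
      rw [hPc, hMc, ← Matrix.transpose_map, ← hcoe, ← Matrix.map_mul, ← Matrix.map_mul, hPMP,
        fromBlocks_map]
      simp only [diagonal_map (map_zero Complex.ofRealHom)]
    have e4 : S = Matrix.fromBlocks (diagonal (fun _ => μ)) (diagonal (fun _ => (0:ℂ)))
        (diagonal (fun _ => (0:ℂ))) (diagonal (fun _ => μ)) := by
      have hsm : μ • (1 : Matrix (Fin N) (Fin N) ℂ) = diagonal (fun _ => μ) := by
        ext i j
        rcases eq_or_ne i j with rfl|h
        · simp
        · simp [Matrix.one_apply_ne h, diagonal_apply_ne _ h]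
      rw [hS, Algebra.algebraMap_eq_smul_one, ← fromBlocks_one, fromBlocks_smul, smul_zero, hsm,
        ← diagonal_zero]
    rw [e1, e2, e3, e4, aux_sub_fromBlocks, det_fromBlocks_diagonal]
    apply Finset.prod_congr rfl
    intro k _
    simp only [Pi.sub_apply]
    push_cast
    ring
  have hmem : ∀ μ : ℂ, μ ∈ spectrum ℂ Mc ↔
      ∃ k, (μ - ((1 - 2 * τu * τp * lam k ^ 2 : ℝ) : ℂ)) * (μ - 1)
          - ((-τu * lam k : ℝ) : ℂ) * ((τp * lam k : ℝ) : ℂ) = 0 := by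
    intro μ
    rw [spectrum.mem_iff, Matrix.isUnit_iff_isUnit_det, isUnit_iff_ne_zero, not_ne_iff,
      hdetform μ, Finset.prod_eq_zero_iff]
    simp
  have heqn : ∀ (k : Fin N) (μ : ℂ),
      (μ - ((1 - 2 * τu * τp * lam k ^ 2 : ℝ) : ℂ)) * (μ - 1)
          - ((-τu * lam k : ℝ) : ℂ) * ((τp * lam k : ℝ) : ℂ)
        = (μ - (1 - 2 * ((τu * τp * lam k ^ 2 : ℝ) : ℂ))) * (μ - 1)
            + ((τu * τp * lam k ^ 2 : ℝ) : ℂ) := by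
    intro k μ
    push_cast
    ring
  have hquad : ∀ k : Fin N,
      (∀ μ : ℂ, (μ - ((1 - 2 * τu * τp * lam k ^ 2 : ℝ) : ℂ)) * (μ - 1)
          - ((-τu * lam k : ℝ) : ℂ) * ((τp * lam k : ℝ) : ℂ) = 0 → ‖μ‖ < 1)
        ↔ τu * τp * lam k ^ 2 < 4/3 := by
    intro k
    have hspos : 0 < τu * τp * lam k ^ 2 :=
      mul_pos ht0 (lt_of_le_of_ne (sq_nonneg _) (Ne.symm (pow_ne_zero 2 (hlam k))))
    rw [← quad_root_iff _ hspos]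
    apply forall_congr'
    intro μ
    rw [heqn k μ]
  have hiff1 : (∀ μ ∈ spectrum ℂ Mc, ‖μ‖ < 1)
      ↔ ∀ k, τu * τp * lam k ^ 2 < 4/3 := by
    constructor
    · intro h k
      rw [← hquad k]
      intro μ hμ
      exact h μ ((hmem μ).mpr ⟨k, hμ⟩)
    · intro h μ hμ
      obtain ⟨k, hk⟩ := (hmem μ).mp hμ
      exact ((hquad k).mpr (h k)) μ hk
  rw [hiff1]
  have hle : ∀ k, lam k ^ 2 ≤ lmax ^ 2 := by
    intro k
    have h1 : |lam k| ≤ lmax := hmax.2 ⟨k, rfl⟩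
    nlinarith [abs_nonneg (lam k), sq_abs (lam k)]
  have hjj : lam j ^ 2 = lmax ^ 2 := by
    have : |lam j| = lmax := hj
    rw [← this, sq_abs]
  constructor
  · intro h
    have h2 := h j
    rw [hjj] at h2
    rw [lt_div_iff₀ (by positivity)]
    nlinarith
  · intro h k
    rw [lt_div_iff₀ (by positivity)] at h
    nlinarith [hle k, ht0]
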